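/- arXiv:1810.00182 — 3 statements merged into one kernel-verified Lean document; each statement's English description precedes it below -/
import Mathlib

section
/- Let H = (1/n) v vᵀ + c·diag(v) where c > 0 and v = (v_1,…,v_{n-1}, −v_n)ᵀ with all v_k > 0. If there exist a_1,…,a_{n-1} with 0 ≤ a_i < 1, not all zero, such that ∑_{i=1}^{n-1} a_i v_i = v_n, then the vector q = (a_1,…,a_{n-1},1)ᵀ satisfies qᵀ H q < 0; hence H has a negative eigenvalue. -/
open BigOperators Matrix

lemma neg_eig_of_neg_form {n : ℕ} (A : Matrix (Fin n) (Fin n) ℝ) (hA : A.IsHermitian)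
    (x : Fin n → ℝ) (h : x ⬝ᵥ (A *ᵥ x) < 0) :
    ∃ (μ : ℝ) (y : Fin n → ℝ), μ < 0 ∧ y ≠ 0 ∧ A *ᵥ y = μ • y := by
  have hnps : ¬ A.PosSemidef := by
    intro hps
    have := hps.dotProduct_mulVec_nonneg x
    simp only [star_trivial] at this
    linarith
  have : ¬ ∀ i, 0 ≤ hA.eigenvalues i := fun hall =>
    hnps (hA.posSemidef_iff_eigenvalues_nonneg.mpr hall)
  push_neg at this
  obtain ⟨i, hi⟩ := this
  exact ⟨hA.eigenvalues i, hA.eigenvectorBasis i, hi,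
    (by simpa using hA.eigenvectorBasis.toBasis.ne_zero i), hA.mulVec_eigenvectorBasis i⟩

theorem saddle_case_m_eq_n_minus_one (n : ℕ) (hn : 2 ≤ n)
    (w : Fin n → ℝ) (hw : ∀ k, 0 < w k) (c : ℝ) (hc : 0 < c)
    (v : Fin n → ℝ) (hv : ∀ k : Fin n, v k = if (k : ℕ) < n - 1 then w k else -(w k))
    (H : Matrix (Fin n) (Fin n) ℝ)
    (hH : H = (1 / n : ℝ) • (Matrix.of fun k j => v k * v j) + c • Matrix.diagonal v)
    (a : Fin n → ℝ) (ha0 : ∀ k, 0 ≤ a k) (ha1 : ∀ k, a k < 1)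
    (hanz : ∃ k : Fin n, (k : ℕ) < n - 1 ∧ a k ≠ 0)
    (hsum : ∑ k ∈ Finset.univ.filter (fun k : Fin n => (k : ℕ) < n - 1), a k * w k
      = w ⟨n - 1, by omega⟩)
    (q : Fin n → ℝ)
    (hq : ∀ k : Fin n, q k = if (k : ℕ) < n - 1 then a k else 1) :
    q ⬝ᵥ (H *ᵥ q) < 0 ∧ ∃ (μ : ℝ) (x : Fin n → ℝ), μ < 0 ∧ x ≠ 0 ∧ H *ᵥ x = μ • x := by
  set last : Fin n := ⟨n - 1, by omega⟩ with hlast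
  have hcompl : Finset.univ.filter (fun k : Fin n => ¬ (k : ℕ) < n - 1) = {last} := by
    ext k
    simp only [Finset.mem_filter, Finset.mem_univ, true_and, Finset.mem_singleton]
    constructor
    · intro hk
      have : (k : ℕ) = n - 1 := by omega
      exact Fin.ext this
    · intro hk; subst hk; simp [hlast]
  -- key sums
  have hvq : ∑ k, v k * q k = 0 := by
    rw [← Finset.sum_filter_add_sum_filter_not Finset.univ (fun k : Fin n => (k : ℕ) < n - 1),
      hcompl, Finset.sum_singleton]
    have h1 : ∀ k ∈ Finset.univ.filter (fun k : Fin n => (k : ℕ) < n - 1),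
        v k * q k = a k * w k := by
      intro k hk
      simp only [Finset.mem_filter] at hk
      rw [hv k, hq k, if_pos hk.2, if_pos hk.2]; ring
    rw [Finset.sum_congr rfl h1, hsum]
    have : ¬ ((last : ℕ) < n - 1) := by simp [hlast]
    rw [hv last, hq last, if_neg this, if_neg this]
    ring
  have hvqq : ∑ k, v k * q k * q k < 0 := by
    rw [← Finset.sum_filter_add_sum_filter_not Finset.univ (fun k : Fin n => (k : ℕ) < n - 1),
      hcompl, Finset.sum_singleton]
    have hlt : ∑ k ∈ Finset.univ.filter (fun k : Fin n => (k : ℕ) < n - 1), v k * q k * q k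
        < ∑ k ∈ Finset.univ.filter (fun k : Fin n => (k : ℕ) < n - 1), a k * w k := by
      obtain ⟨k0, hk0, hk0ne⟩ := hanz
      apply Finset.sum_lt_sum
      · intro k hk
        simp only [Finset.mem_filter] at hk
        rw [hv k, hq k, if_pos hk.2, if_pos hk.2]
        nlinarith [mul_nonneg (mul_nonneg (ha0 k) (sub_nonneg.2 (le_of_lt (ha1 k)))) (le_of_lt (hw k))]
      · refine ⟨k0, by simp [hk0], ?_⟩
        rw [hv k0, hq k0, if_pos hk0, if_pos hk0]
        have h1 : 0 < a k0 := lt_of_le_of_ne (ha0 k0) (Ne.symm hk0ne)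
        nlinarith [mul_pos (mul_pos h1 (sub_pos.2 (ha1 k0))) (hw k0)]
    have : ¬ ((last : ℕ) < n - 1) := by simp [hlast]
    rw [hv last, hq last, if_neg this, if_neg this]
    rw [hsum] at hlt
    linarith
  have hA : q ⬝ᵥ ((Matrix.of fun k j => v k * v j) *ᵥ q)
      = (∑ k, v k * q k) * (∑ k, v k * q k) := by
    simp only [Matrix.mulVec, dotProduct, Matrix.of_apply]
    rw [Finset.sum_mul]
    refine Finset.sum_congr rfl fun k _ => ?_
    rw [Finset.mul_sum, Finset.mul_sum]
    exact Finset.sum_congr rfl fun j _ => by ring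
  have hD : q ⬝ᵥ (Matrix.diagonal v *ᵥ q) = ∑ k, v k * q k * q k := by
    simp only [dotProduct, Matrix.mulVec_diagonal]
    exact Finset.sum_congr rfl fun k _ => by ring
  have hquad : q ⬝ᵥ (H *ᵥ q) = (1 / n : ℝ) * ((∑ k, v k * q k) * (∑ k, v k * q k))
      + c * ∑ k, v k * q k * q k := by
    rw [hH]
    simp only [Matrix.add_mulVec, Matrix.smul_mulVec, dotProduct_add, dotProduct_smul,
      smul_eq_mul, hA, hD]
  have hneg : q ⬝ᵥ (H *ᵥ q) < 0 := by
    rw [hquad, hvq]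
    nlinarith
  refine ⟨hneg, ?_⟩
  have hHerm : H.IsHermitian := by
    rw [hH]
    show _ᴴ = _
    ext i j
    simp only [Matrix.conjTranspose_apply, Matrix.add_apply, Matrix.smul_apply, Matrix.of_apply,
      Matrix.diagonal_apply, star_trivial, smul_eq_mul]
    rcases eq_or_ne i j with rfl | hij
    · ring
    · simp only [hij, Ne.symm hij, if_false, mul_zero, mul_comm (v j) (v i)]
  exact neg_eig_of_neg_form H hHerm q hneg
end

section
/- Let H = (1/n) v vᵀ + c·diag(v) with c > 0, where v ∈ ℝⁿ has entries v_k = s_k w_k with w_k > 0 and signs s_k ∈ {+1,−1}, and suppose the last two entries have the same sign (s_{n-1} = s_n = −1 say) for n ≥ 3 with at least one positive-sign entry. Then the vector q = (0,…,0,−w_n, w_{n-1})ᵀ satisfies vᵀq = 0 and qᵀ H q = −c·w_{n-1} w_n (w_{n-1} + w_n) < 0, so H is not positive semidefinite. -/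
open BigOperators Matrix

theorem saddle_case_general (n : ℕ) (hn : 3 ≤ n)
    (w : Fin n → ℝ) (hw : ∀ k, 0 < w k) (c : ℝ) (hc : 0 < c)
    (s : Fin n → ℝ) (hs : ∀ k, s k = 1 ∨ s k = -1)
    (hslast : s ⟨n - 1, by omega⟩ = -1 ∧ s ⟨n - 2, by omega⟩ = -1)
    (hspos : ∃ k, s k = 1)
    (v : Fin n → ℝ) (hv : ∀ k, v k = s k * w k)
    (H : Matrix (Fin n) (Fin n) ℝ)
    (hH : H = (1 / n : ℝ) • (Matrix.of fun k j => v k * v j) + c • Matrix.diagonal v)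
    (q : Fin n → ℝ)
    (hq : ∀ k : Fin n, q k =
      if (k : ℕ) = n - 2 then -(w ⟨n - 1, by omega⟩)
      else if (k : ℕ) = n - 1 then w ⟨n - 2, by omega⟩ else 0) :
    v ⬝ᵥ q = 0 ∧
    q ⬝ᵥ (H *ᵥ q) = -(c * w ⟨n - 2, by omega⟩ * w ⟨n - 1, by omega⟩ *
      (w ⟨n - 2, by omega⟩ + w ⟨n - 1, by omega⟩)) ∧
    q ⬝ᵥ (H *ᵥ q) < 0 ∧ ¬ H.PosSemidef := by
  have ha : n - 2 < n := by omega
  have hb : n - 1 < n := by omega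
  set A : Fin n := ⟨n - 2, ha⟩ with hA
  set B : Fin n := ⟨n - 1, hb⟩ with hB
  have hAv : (A : ℕ) = n - 2 := rfl
  have hBv : (B : ℕ) = n - 1 := rfl
  have hab : A ≠ B := by
    intro h
    have := congrArg Fin.val h
    rw [hAv, hBv] at this
    omega
  have hqa : q A = -(w B) := by rw [hq, hAv, if_pos rfl]
  have hqb : q B = w A := by
    rw [hq, hBv, if_neg (by omega), if_pos rfl]
  have hq0 : ∀ k : Fin n, k ≠ A → k ≠ B → q k = 0 := by
    intro k h1 h2
    rw [hq, if_neg (fun h => h1 (Fin.ext h)), if_neg (fun h => h2 (Fin.ext h))]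
  have hva : v A = -(w A) := by rw [hv, hslast.2]; ring
  have hvb : v B = -(w B) := by rw [hv, hslast.1]; ring
  have hvq : v ⬝ᵥ q = 0 := by
    rw [dotProduct]
    rw [Fintype.sum_eq_add A B hab (f := fun k => v k * q k)
      (fun k ⟨h1, h2⟩ => by show v k * q k = 0; rw [hq0 k h1 h2, mul_zero])]
    rw [hqa, hqb, hva, hvb]; ring
  have hmv : (Matrix.of fun k j => v k * v j) *ᵥ q = 0 := by
    funext k
    show ∑ j, v k * v j * q j = 0
    simp only [mul_assoc]
    rw [← Finset.mul_sum]
    rw [show ∑ j, v j * q j = v ⬝ᵥ q from rfl, hvq, mul_zero]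
  have hdiag : q ⬝ᵥ (Matrix.diagonal v *ᵥ q)
      = -(w A * w B * (w A + w B)) := by
    rw [dotProduct]
    have : ∀ k, q k * (Matrix.diagonal v *ᵥ q) k = q k * (v k * q k) := by
      intro k; rw [Matrix.mulVec_diagonal]
    simp only [this]
    rw [Fintype.sum_eq_add A B hab (f := fun k => q k * (v k * q k))
      (fun k ⟨h1, h2⟩ => by show q k * (v k * q k) = 0; rw [hq0 k h1 h2, zero_mul])]
    rw [hqa, hqb, hva, hvb]; ring
  have hmain : q ⬝ᵥ (H *ᵥ q) = -(c * w A * w B * (w A + w B)) := by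
    rw [hH, Matrix.add_mulVec, Matrix.smul_mulVec, Matrix.smul_mulVec,
      dotProduct_add, dotProduct_smul, dotProduct_smul, hmv, hdiag]
    simp only [Matrix.mulVec_zero, dotProduct_zero, smul_eq_mul, mul_zero, zero_add]
    ring
  have hneg : q ⬝ᵥ (H *ᵥ q) < 0 := by
    rw [hmain]
    have h1 := hw A
    have h2 := hw B
    have := mul_pos (mul_pos (mul_pos hc h1) h2) (add_pos h1 h2)
    linarith
  refine ⟨hvq, hmain, hneg, ?_⟩
  intro h
  have := h.dotProduct_mulVec_nonneg q
  simp only [star_trivial] at this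
  linarith
end

section
/- More generally, a centroid speed v_ref is achievable (i.e., there exist headings with ‖(1/n)∑_k v_k e^{iθ_k}‖ = v_ref) for every v_ref in the interval [max(0, (1/n)(2·max_k v_k − ∑_k v_k)), (1/n)∑_k v_k]. -/
open Complex BigOperators

/-- Balanced-subset lemma: from a finite family of reals in `[0, a]` one can
pick a subset whose sum is within `a/2`-balance of half the total. -/
lemma balance_subset {ι : Type*} [DecidableEq ι] (a : ℝ) (ha : 0 ≤ a)
    (s : Finset ι) (f : ι → ℝ) :
    (∀ i ∈ s, 0 ≤ f i ∧ f i ≤ a) →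
    ∃ B ⊆ s, |2 * ∑ i ∈ B, f i - ∑ i ∈ s, f i| ≤ a := by
  induction s using Finset.induction_on with
  | empty => intro _; exact ⟨∅, Finset.Subset.refl _, by simpa⟩
  | @insert x s hx ih =>
    intro hf
    obtain ⟨B, hBs, hB⟩ := ih (fun i hi => hf i (Finset.mem_insert_of_mem hi))
    have hxB : x ∉ B := fun h => hx (hBs h)
    obtain ⟨hfx0, hfxa⟩ := hf x (Finset.mem_insert_self x s)
    rw [abs_le] at hB
    rw [Finset.sum_insert hx]
    rcases le_total (2 * ∑ i ∈ B, f i) (∑ i ∈ s, f i) with h | h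
    · refine ⟨insert x B, Finset.insert_subset_insert x hBs, ?_⟩
      rw [Finset.sum_insert hxB, abs_le]
      constructor <;> linarith
    · refine ⟨B, hBs.trans (Finset.subset_insert x s), ?_⟩
      rw [abs_le]
      constructor <;> linarith

/-- Closing a triangle with side lengths satisfying the triangle inequality. -/
lemma triangle_close (a b c : ℝ) (ha : 0 < a) (hb : 0 ≤ b) (hc : 0 ≤ c)
    (h1 : a ≤ b + c) (h2 : b ≤ a + c) (h3 : c ≤ a + b) :
    ∃ z w : ℂ, ‖z‖ = b ∧ ‖w‖ = c ∧ (a : ℂ) + z + w = 0 := by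
  set xr : ℝ := (c ^ 2 - a ^ 2 - b ^ 2) / (2 * a) with hxr
  have key : (c ^ 2 - a ^ 2 - b ^ 2) ^ 2 ≤ (2 * a * b) ^ 2 := by
    nlinarith [mul_nonneg (mul_nonneg (by linarith : (0:ℝ) ≤ a + b - c)
      (by linarith : (0:ℝ) ≤ a + b + c)) (mul_nonneg
      (by linarith : (0:ℝ) ≤ b + c - a) (by linarith : (0:ℝ) ≤ a + c - b))]
  have hx2 : xr ^ 2 ≤ b ^ 2 := by
    rw [hxr, div_pow]
    rw [div_le_iff₀ (by positivity)]
    calc (c ^ 2 - a ^ 2 - b ^ 2) ^ 2 ≤ (2 * a * b) ^ 2 := key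
    _ = b ^ 2 * (2 * a) ^ 2 := by ring
  set yr : ℝ := Real.sqrt (b ^ 2 - xr ^ 2) with hyrdef
  have hyr : yr ^ 2 = b ^ 2 - xr ^ 2 := Real.sq_sqrt (by linarith)
  have hax : 2 * a * xr = c ^ 2 - a ^ 2 - b ^ 2 := by
    rw [hxr, mul_div_assoc']; exact mul_div_cancel_left₀ _ (by positivity)
  refine ⟨⟨xr, yr⟩, ⟨-a - xr, -yr⟩, ?_, ?_, ?_⟩
  · rw [Complex.norm_def, Complex.normSq_mk]
    have : xr * xr + yr * yr = b ^ 2 := by nlinarith [hyr]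
    rw [this]
    exact Real.sqrt_sq hb
  · rw [Complex.norm_def, Complex.normSq_mk]
    have : (-a - xr) * (-a - xr) + -yr * -yr = c ^ 2 := by nlinarith [hyr, hax]
    rw [this]
    exact Real.sqrt_sq hc
  · apply Complex.ext <;> simp

theorem achievable_centroid_speeds (n : ℕ) (hn : 2 ≤ n)
    (v : Fin n → ℝ) (hv : ∀ k, 0 < v k)
    (j : Fin n) (hmax : ∀ k, v k ≤ v j)
    (vref : ℝ)
    (hlo : max 0 ((2 * v j - ∑ k, v k) / n) ≤ vref)
    (hhi : vref ≤ (1 / n) * ∑ k, v k) :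
    ∃ θ : Fin n → ℝ,
      ‖(1 / n : ℂ) * ∑ k, (v k : ℂ) * Complex.exp (θ k * Complex.I)‖ = vref := by
  classical
  set S : ℝ := ∑ k, v k with hS
  set a : ℝ := v j with haj
  have hn0 : 0 < n := by omega
  have hn' : (0:ℝ) < n := by exact_mod_cast hn0
  have ha : 0 < a := hv j
  have haS : a ≤ S := Finset.single_le_sum (fun k _ => (hv k).le) (Finset.mem_univ j)
  have hS0 : 0 < S := lt_of_lt_of_le ha haS
  set T : Finset (Fin n) := Finset.univ.erase j with hT
  have hTsum : ∑ i ∈ T, v i = S - a := by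
    have := Finset.sum_erase_add Finset.univ v (Finset.mem_univ j)
    rw [hT]; linarith [this]
  -- construct angles achieving the lower bound L
  set L : ℝ := max 0 ((2 * a - S) / n) with hL
  have key : ∃ φ : Fin n → ℝ,
      ‖(1 / n : ℂ) * ∑ k, (v k : ℂ) * Complex.exp (φ k * Complex.I)‖ = L := by
    rcases le_total (2 * a) S with hcase | hcase
    · -- L = 0, close the polygon
      have hL0 : L = 0 := by
        rw [hL, max_eq_left]
        apply div_nonpos_of_nonpos_of_nonneg <;> linarith
      obtain ⟨B, hBT, hB⟩ := balance_subset a ha.le T v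
        (fun i _ => ⟨(hv i).le, hmax i⟩)
      set b : ℝ := ∑ i ∈ B, v i with hb
      set c : ℝ := (S - a) - b with hc
      have hb0 : 0 ≤ b := Finset.sum_nonneg fun i _ => (hv i).le
      have hbT : b ≤ S - a := by
        rw [hb, ← hTsum]
        exact Finset.sum_le_sum_of_subset_of_nonneg hBT fun i _ _ => (hv i).le
      have hc0 : 0 ≤ c := by rw [hc]; linarith
      rw [abs_le] at hB
      obtain ⟨z, w, hz, hw, hzw⟩ := triangle_close a b c ha hb0 hc0
        (by rw [hc]; linarith) (by rw [hc]; linarith [hB.2]) (by rw [hc]; linarith [hB.1])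
      refine ⟨fun k => if k = j then 0 else if k ∈ B then z.arg else w.arg, ?_⟩
      have hsplit : ∑ k, (v k : ℂ) * Complex.exp
          ((if k = j then (0:ℝ) else if k ∈ B then z.arg else w.arg) * Complex.I)
          = (a : ℂ) + z + w := by
        rw [← Finset.add_sum_erase Finset.univ _ (Finset.mem_univ j)]
        have hrest : ∑ k ∈ Finset.univ.erase j, (v k : ℂ) * Complex.exp
            ((if k = j then (0:ℝ) else if k ∈ B then z.arg else w.arg) * Complex.I)
            = ∑ k ∈ T, (v k : ℂ) * Complex.exp
            ((if k ∈ B then z.arg else w.arg : ℝ) * Complex.I) := by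
          refine Finset.sum_congr rfl fun k hk => ?_
          rw [if_neg (Finset.ne_of_mem_erase hk)]
        rw [hrest, ← Finset.sum_sdiff hBT]
        have h1 : ∑ k ∈ T \ B, (v k : ℂ) * Complex.exp
            ((if k ∈ B then z.arg else w.arg : ℝ) * Complex.I)
            = (c : ℂ) * Complex.exp (w.arg * Complex.I) := by
          rw [Finset.sum_congr rfl fun k hk => by
            rw [if_neg (Finset.mem_sdiff.mp hk).2]]
          rw [← Finset.sum_mul, ← Complex.ofReal_sum]
          congr 2
          have : ∑ i ∈ T \ B, v i = (∑ i ∈ T, v i) - b := by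
            rw [hb, eq_sub_iff_add_eq, Finset.sum_sdiff hBT]
          rw [this, hTsum, hc]
        have h2 : ∑ k ∈ B, (v k : ℂ) * Complex.exp
            ((if k ∈ B then z.arg else w.arg : ℝ) * Complex.I)
            = (b : ℂ) * Complex.exp (z.arg * Complex.I) := by
          rw [Finset.sum_congr rfl fun k hk => by rw [if_pos hk]]
          rw [← Finset.sum_mul, ← Complex.ofReal_sum, hb]
        rw [h1, h2, ← hz, ← hw, Complex.norm_mul_exp_arg_mul_I,
          Complex.norm_mul_exp_arg_mul_I]
        simp only [haj]
        simp
        ring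
      rw [hsplit, hzw, mul_zero, norm_zero, hL0]
    · -- L = (2a - S)/n, flip only the j-th vector
      have hL1 : L = (2 * a - S) / n := by
        rw [hL, max_eq_right]
        apply div_nonneg (by linarith) hn'.le
      refine ⟨fun k => if k = j then Real.pi else 0, ?_⟩
      have hsplit : ∑ k, (v k : ℂ) * Complex.exp
          ((if k = j then Real.pi else (0:ℝ)) * Complex.I) = ((S - 2 * a : ℝ) : ℂ) := by
        rw [← Finset.add_sum_erase Finset.univ _ (Finset.mem_univ j)]
        have hrest : ∑ k ∈ Finset.univ.erase j, (v k : ℂ) * Complex.exp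
            ((if k = j then Real.pi else (0:ℝ)) * Complex.I)
            = ((S - a : ℝ) : ℂ) := by
          rw [Finset.sum_congr rfl fun k hk => by
            rw [if_neg (Finset.ne_of_mem_erase hk), Complex.ofReal_zero, zero_mul,
              Complex.exp_zero, mul_one]]
          rw [← Complex.ofReal_sum, ← hT, hTsum]
        rw [hrest, if_pos rfl, Complex.exp_pi_mul_I]
        push_cast
        ring
      rw [hsplit]
      have : (1 / n : ℂ) * ((S - 2 * a : ℝ) : ℂ) = (((S - 2 * a) / n : ℝ) : ℂ) := by
        push_cast; ring
      rw [this, Complex.norm_real, Real.norm_eq_abs, hL1, abs_div, _root_.abs_of_nonneg hn'.le,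
        _root_.abs_of_nonpos (by linarith)]
      ring
  obtain ⟨φ, hφ⟩ := key
  set F : ℝ → ℝ := fun t =>
    ‖(1 / n : ℂ) * ∑ k, (v k : ℂ) * Complex.exp ((t * φ k : ℝ) * Complex.I)‖
    with hF
  have hcont : Continuous F := by
    apply continuous_norm.comp
    apply continuous_const.mul
    apply continuous_finset_sum
    intro k _
    exact continuous_const.mul (Complex.continuous_exp.comp
      ((Complex.continuous_ofReal.comp (continuous_id.mul continuous_const)).mul
        continuous_const))
  have hF0 : F 0 = (1 / n) * S := by
    rw [hF]
    simp only [zero_mul, Complex.ofReal_zero, Complex.exp_zero, mul_one]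
    rw [← Complex.ofReal_sum, ← hS]
    have : (1 / n : ℂ) * (S : ℂ) = ((1 / n * S : ℝ) : ℂ) := by push_cast; ring
    rw [this, Complex.norm_real, Real.norm_eq_abs, _root_.abs_of_nonneg (by positivity)]
  have hF1 : F 1 = L := by
    rw [hF]; simp only [one_mul]; exact hφ
  have hmem : vref ∈ Set.Icc (F 1) (F 0) := by
    rw [hF0, hF1]
    exact ⟨hlo, hhi⟩
  obtain ⟨t, _, ht⟩ := intermediate_value_Icc' (by norm_num : (0:ℝ) ≤ 1)
    hcont.continuousOn hmem
  exact ⟨fun k => t * φ k, ht⟩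
end
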